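/- Let each of n vertices independently choose r(v) = j with probability 2^{-j} for j ≥ 1, let j_max = max_v r(v) and MAX = {v : r(v) = j_max}. Then P(|MAX| > 2·log₂ n) ≤ 2^{-2·log₂ n} = 1/n². -/

import Mathlib

open MeasureTheory ProbabilityTheory
open scoped ENNReal NNReal

noncomputable def geomHalf : Measure ℕ :=
  (ProbabilityTheory.geometricPMF (p := 1 / 2) (by norm_num) (by norm_num)).toMeasure

instance : IsProbabilityMeasure geomHalf :=
  PMF.toMeasure.isProbabilityMeasure _

lemma geomHalf_singleton (i : ℕ) : geomHalf {i} = 2⁻¹ ^ (i + 1) := by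
  rw [geomHalf, PMF.toMeasure_apply_singleton _ _ (measurableSet_singleton i)]
  show ENNReal.ofReal (geometricPMFReal (1/2) i) = _
  rw [geometricPMFReal]
  rw [show (1 - 1/2 : ℝ) ^ i * (1/2) = ((2:ℝ)⁻¹) ^ (i+1) by rw [pow_succ]; norm_num]
  rw [ENNReal.ofReal_pow (by norm_num), ENNReal.ofReal_inv_of_pos (by norm_num)]
  norm_num

lemma geomHalf_Ici (i : ℕ) : geomHalf (Set.Ici i) = 2⁻¹ ^ i := by
  induction i with
  | zero =>
    have h : Set.Ici (0:ℕ) = Set.univ := by ext m; simp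
    rw [h, measure_univ, pow_zero]
  | succ i ih =>
    have h : Set.Ici (i+1) = Set.Ici i \ {i} := by
      ext m
      simp only [Set.mem_Ici, Set.mem_diff, Set.mem_singleton_iff]
      omega
    rw [h, measure_diff (by simp) (measurableSet_singleton i).nullMeasurableSet
        (measure_ne_top _ _), geomHalf_singleton, ih]
    refine ENNReal.sub_eq_of_eq_add (by simp) ?_
    rw [pow_succ, ← two_mul, ← mul_assoc, mul_comm (2:ℝ≥0∞) (2⁻¹ ^ i), mul_assoc,
      mul_comm (2:ℝ≥0∞), ENNReal.inv_mul_cancel (by norm_num) (by norm_num), mul_one]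

lemma geomHalf_Iio (i : ℕ) : geomHalf (Set.Iio i) = 1 - 2⁻¹ ^ i := by
  have h : Set.Iio i = (Set.Ici i)ᶜ := by ext m; simp
  rw [h, prob_compl_eq_one_sub measurableSet_Ici, geomHalf_Ici]

section Core

variable {V : Type*} [Fintype V] [Nonempty V]

lemma measurableSet_all (s : Set (V → ℕ)) : MeasurableSet s :=
  (Set.to_countable s).measurableSet

lemma pi_box_apply (i : ℕ) (S : Finset V) (g : V → Set ℕ)
    (hg1 : ∀ v ∈ S, geomHalf (g v) = 2⁻¹ ^ (i + 1))
    (hg2 : ∀ v ∉ S, geomHalf (g v) = 1 - 2⁻¹ ^ i) :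
    (Measure.pi fun _ : V => geomHalf) (Set.univ.pi g)
      = ((2:ℝ≥0∞)⁻¹ ^ (i + 1)) ^ S.card * (1 - 2⁻¹ ^ i) ^ (Fintype.card V - S.card) := by
  classical
  rw [Measure.pi_pi]
  rw [Finset.prod_congr rfl
    (g := fun v => if v ∈ S then ((2:ℝ≥0∞)⁻¹ ^ (i + 1)) else 1 - 2⁻¹ ^ i)
    (by intro v _
        by_cases hv : v ∈ S
        · simp [hv, hg1 v hv]
        · simp [hv, hg2 v hv])]
  rw [Finset.prod_ite, Finset.prod_const, Finset.prod_const]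
  congr 1
  · congr 1
    exact congrArg Finset.card (Finset.filter_univ_mem S)
  · congr 1
    rw [Finset.filter_not, Finset.filter_univ_mem, ← Finset.compl_eq_univ_sdiff,
      Finset.card_compl]


open Classical in
variable (V) in
/-- the box event: coordinates in `T` are `> i`, in `S \ T` equal to `i`, outside `S` less. -/
noncomputable def boxT (i : ℕ) (S T : Finset V) : Set (V → ℕ) :=
  Set.univ.pi fun v => if v ∈ T then Set.Ici (i+1) else if v ∈ S then {i} else Set.Iio i

lemma boxT_measure (i : ℕ) (S T : Finset V) (hTS : T ⊆ S) :
    (Measure.pi fun _ : V => geomHalf) (boxT V i S T)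
      = ((2:ℝ≥0∞)⁻¹ ^ (i + 1)) ^ S.card * (1 - 2⁻¹ ^ i) ^ (Fintype.card V - S.card) := by
  refine pi_box_apply i S _ ?_ ?_
  · intro v hv
    by_cases hvT : v ∈ T
    · rw [if_pos hvT, geomHalf_Ici]
    · rw [if_neg hvT, if_pos hv, geomHalf_singleton]
  · intro v hv
    have hvT : v ∉ T := fun h => hv (hTS h)
    rw [if_neg hvT, if_neg hv, geomHalf_Iio]

lemma boxT_filter {i : ℕ} {S T : Finset V} (hTS : T ⊆ S) {ω : V → ℕ}
    (hω : ω ∈ boxT V i S T) :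
    Finset.univ.filter (fun v => i ≤ ω v) = S ∧
      Finset.univ.filter (fun v => i + 1 ≤ ω v) = T := by
  classical
  have hv : ∀ v : V, (v ∈ T ∧ i + 1 ≤ ω v) ∨ (v ∉ T ∧ v ∈ S ∧ ω v = i) ∨
      (v ∉ T ∧ v ∉ S ∧ ω v < i) := by
    intro v
    have h0 : ω v ∈ (if v ∈ T then Set.Ici (i+1) else if v ∈ S then ({i} : Set ℕ) else Set.Iio i) := hω v (Set.mem_univ v)
    by_cases hvT : v ∈ T
    · rw [if_pos hvT] at h0
      exact Or.inl ⟨hvT, h0⟩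
    · rw [if_neg hvT] at h0
      by_cases hvS : v ∈ S
      · rw [if_pos hvS] at h0
        exact Or.inr (Or.inl ⟨hvT, hvS, h0⟩)
      · rw [if_neg hvS] at h0
        exact Or.inr (Or.inr ⟨hvT, hvS, h0⟩)
  constructor
  · ext v
    simp only [Finset.mem_filter, Finset.mem_univ, true_and]
    rcases hv v with ⟨h1, h2⟩ | ⟨h1, h2, h3⟩ | ⟨h1, h2, h3⟩
    · exact iff_of_true (by omega) (hTS h1)
    · exact iff_of_true (by omega) h2
    · exact iff_of_false (by omega) h2
  · ext v
    simp only [Finset.mem_filter, Finset.mem_univ, true_and]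
    rcases hv v with ⟨h1, h2⟩ | ⟨h1, h2, h3⟩ | ⟨h1, h2, h3⟩
    · exact iff_of_true h2 h1
    · exact iff_of_false (by omega) h1
    · exact iff_of_false (by omega) h1

lemma core (k : ℕ) (hk : 1 ≤ k) :
    (Measure.pi fun _ : V => geomHalf)
      {ω : V → ℕ | k ≤ ((Finset.univ.filter
        (fun v : V => ω v + 1 = Finset.univ.sup (fun u : V => ω u + 1))).card)}
      ≤ ((2:ℝ≥0∞) ^ k - 1)⁻¹ := by
  classical
  set μ : Measure (V → ℕ) := Measure.pi fun _ : V => geomHalf with hμ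
  set c : ℝ≥0∞ := (2:ℝ≥0∞) ^ k - 1 with hc
  set A : ℕ → Set (V → ℕ) := fun i =>
    {ω | k ≤ (Finset.univ.filter fun v => i ≤ ω v).card ∧
      (Finset.univ.filter fun v => i + 1 ≤ ω v) = ∅} with hA
  set B : ℕ → Set (V → ℕ) := fun i =>
    {ω | k ≤ (Finset.univ.filter fun v => i ≤ ω v).card ∧
      (Finset.univ.filter fun v => i + 1 ≤ ω v).card < k} with hB
  -- the event is contained in the union of the A i
  have hsub : {ω : V → ℕ | k ≤ ((Finset.univ.filter
      (fun v : V => ω v + 1 = Finset.univ.sup (fun u : V => ω u + 1))).card)}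
      ⊆ ⋃ i, A i := by
    intro ω hω
    set i := Finset.univ.sup ω with hi
    have hle : ∀ v : V, ω v ≤ i := fun v => Finset.le_sup (Finset.mem_univ v)
    have hsup : Finset.univ.sup (fun u : V => ω u + 1) = i + 1 := by
      obtain ⟨u0, -, hu0⟩ := Finset.exists_mem_eq_sup Finset.univ
        Finset.univ_nonempty ω
      rw [← hi] at hu0
      refine le_antisymm (Finset.sup_le fun u _ => by have := hle u; omega) ?_
      have : ω u0 + 1 ≤ Finset.univ.sup (fun u : V => ω u + 1) :=
        Finset.le_sup (f := fun u : V => ω u + 1) (Finset.mem_univ u0)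
      omega
    refine Set.mem_iUnion.2 ⟨i, ?_, ?_⟩
    · have : (Finset.univ.filter (fun v : V => ω v + 1 =
          Finset.univ.sup (fun u : V => ω u + 1)))
          = Finset.univ.filter (fun v => i ≤ ω v) := by
        refine Finset.filter_congr fun v _ => ?_
        rw [hsup]
        have := hle v
        constructor <;> intro h <;> omega
      rw [← this]; exact hω
    · refine Finset.filter_eq_empty_iff.2 fun v _ => by have := hle v; omega
  -- each A i is controlled by B i
  have hAB : ∀ i, c * μ (A i) ≤ μ (B i) := by
    intro i
    set P : Finset (Finset V) := Finset.univ.powerset.filter (fun S => k ≤ S.card) with hP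
    set F : Finset V → Finset (Finset V) := fun S =>
      S.powerset.filter (fun T => T.card < k) with hF
    -- A i is covered by the boxes with T = ∅
    have h1 : μ (A i) ≤ ∑ S ∈ P, μ (boxT V i S ∅) := by
      refine le_trans (measure_mono ?_) (measure_biUnion_finset_le P _)
      intro ω hω
      obtain ⟨hcard, hempty⟩ := hω
      set S := Finset.univ.filter (fun v => i ≤ ω v) with hS
      have hmem : S ∈ P := by
        simp only [hP, Finset.mem_filter, Finset.mem_powerset]
        exact ⟨Finset.subset_univ _, hcard⟩
      refine Set.mem_biUnion hmem ?_
      intro v _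
      by_cases hvS : v ∈ S
      · have h1 : i ≤ ω v := (Finset.mem_filter.1 hvS).2
        have h2 : ¬ (i + 1 ≤ ω v) := by
          intro h
          have : v ∈ Finset.univ.filter fun v => i + 1 ≤ ω v :=
            Finset.mem_filter.2 ⟨Finset.mem_univ v, h⟩
          rw [hempty] at this
          exact Finset.notMem_empty v this
        show ω v ∈ (if v ∈ (∅ : Finset V) then Set.Ici (i+1) else
          if v ∈ S then ({i} : Set ℕ) else Set.Iio i)
        rw [if_neg (Finset.notMem_empty v), if_pos hvS]
        show ω v = i
        omega
      · have h1 : ¬ i ≤ ω v := fun h => hvS (Finset.mem_filter.2 ⟨Finset.mem_univ v, h⟩)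
        show ω v ∈ (if v ∈ (∅ : Finset V) then Set.Ici (i+1) else
          if v ∈ S then ({i} : Set ℕ) else Set.Iio i)
        rw [if_neg (Finset.notMem_empty v), if_neg hvS]
        show ω v < i
        omega
    -- counting subsets
    have hcount : ∀ S ∈ P, c * μ (boxT V i S ∅) ≤ ∑ T ∈ F S, μ (boxT V i S T) := by
      intro S hS
      have hSk : k ≤ S.card := (Finset.mem_filter.1 hS).2
      obtain ⟨S₀, hS₀S, hS₀card⟩ := Finset.exists_subset_card_eq hSk
      have hconst : ∀ T ∈ F S, μ (boxT V i S T) = μ (boxT V i S ∅) := by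
        intro T hT
        have hTS : T ⊆ S := Finset.mem_powerset.1 (Finset.mem_filter.1 hT).1
        rw [boxT_measure i S T hTS, boxT_measure i S ∅ (Finset.empty_subset S)]
      rw [Finset.sum_congr rfl hconst, Finset.sum_const, nsmul_eq_mul]
      refine mul_le_mul_left ?_ _
      have hsubfam : S₀.powerset.erase S₀ ⊆ F S := by
        intro T hT
        obtain ⟨hne, hTsub⟩ := Finset.mem_erase.1 hT
        have hTS₀ : T ⊆ S₀ := Finset.mem_powerset.1 hTsub
        refine Finset.mem_filter.2 ⟨Finset.mem_powerset.2 (hTS₀.trans hS₀S), ?_⟩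
        have : T ⊂ S₀ := lt_of_le_of_ne hTS₀ hne
        have := Finset.card_lt_card this
        omega
      have hcard2 : 2 ^ k - 1 ≤ (F S).card := by
        have := Finset.card_le_card hsubfam
        rwa [Finset.card_erase_of_mem (Finset.mem_powerset_self S₀),
          Finset.card_powerset, hS₀card] at this
      calc c = ((2 ^ k - 1 : ℕ) : ℝ≥0∞) := by
            rw [hc]
            push_cast [Nat.one_le_two_pow]
            norm_num
        _ ≤ ((F S).card : ℝ≥0∞) := by exact_mod_cast hcard2
    -- the boxes for distinct (S, T) are disjoint and contained in B i
    have h2 : ∑ S ∈ P, ∑ T ∈ F S, μ (boxT V i S T) ≤ μ (B i) := by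
      rw [← Finset.sum_sigma P F (fun p => μ (boxT V i p.1 p.2))]
      have hTSp : ∀ p ∈ P.sigma F, p.2 ⊆ p.1 ∧ k ≤ p.1.card ∧ p.2.card < k := by
        intro p hp
        obtain ⟨hp1, hp2⟩ := Finset.mem_sigma.1 hp
        exact ⟨Finset.mem_powerset.1 (Finset.mem_filter.1 hp2).1,
          (Finset.mem_filter.1 hp1).2, (Finset.mem_filter.1 hp2).2⟩
      rw [← measure_biUnion_finset ?_ (fun p _ => measurableSet_all _)]
      · refine measure_mono ?_
        intro ω hω
        obtain ⟨p, hp, hωp⟩ := Set.mem_iUnion₂.1 hω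
        obtain ⟨hTS, hScard, hTcard⟩ := hTSp p hp
        obtain ⟨hfS, hfT⟩ := boxT_filter hTS hωp
        exact ⟨by rw [hfS]; exact hScard, by rw [hfT]; exact hTcard⟩
      · intro p hp p' hp' hne
        simp only [Function.onFun]
        rw [Set.disjoint_left]
        intro ω hωp hωp'
        obtain ⟨hTS, -, -⟩ := hTSp p hp
        obtain ⟨hTS', -, -⟩ := hTSp p' hp'
        obtain ⟨h1, h2⟩ := boxT_filter hTS hωp
        obtain ⟨h1', h2'⟩ := boxT_filter hTS' hωp'
        exact hne (Sigma.ext (by rw [← h1, ← h1']) (heq_of_eq (by rw [← h2, ← h2'])))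
    calc c * μ (A i) ≤ c * ∑ S ∈ P, μ (boxT V i S ∅) := mul_le_mul_right h1 c
      _ = ∑ S ∈ P, c * μ (boxT V i S ∅) := Finset.mul_sum _ _ _
      _ ≤ ∑ S ∈ P, ∑ T ∈ F S, μ (boxT V i S T) := Finset.sum_le_sum hcount
      _ ≤ μ (B i) := h2
  -- the B i are pairwise disjoint
  have hBdisj : Pairwise (Function.onFun Disjoint B) := by
    have key : ∀ i j, i < j → Disjoint (B i) (B j) := by
      intro i j hij
      rw [Set.disjoint_left]
      rintro ω ⟨-, hBi2⟩ ⟨hBj1, -⟩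
      have hsub2 : (Finset.univ.filter fun v => j ≤ ω v)
          ⊆ Finset.univ.filter fun v => i + 1 ≤ ω v := by
        intro v hv
        simp only [Finset.mem_filter, Finset.mem_univ, true_and] at hv ⊢
        omega
      have := Finset.card_le_card hsub2
      omega
    intro i j hij
    rcases hij.lt_or_gt with h | h
    · exact key i j h
    · exact (key j i h).symm
  have hBsum : ∑' i, μ (B i) ≤ 1 := by
    rw [← measure_iUnion hBdisj fun i => measurableSet_all _]
    exact prob_le_one
  -- put it together
  have hmain : μ {ω : V → ℕ | k ≤ ((Finset.univ.filter
      (fun v : V => ω v + 1 = Finset.univ.sup (fun u : V => ω u + 1))).card)} * c ≤ 1 := by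
    rw [mul_comm]
    calc c * μ _ ≤ c * μ (⋃ i, A i) := mul_le_mul_right (measure_mono hsub) c
      _ ≤ c * ∑' i, μ (A i) := mul_le_mul_right (measure_iUnion_le A) c
      _ = ∑' i, c * μ (A i) := ENNReal.tsum_mul_left.symm
      _ ≤ ∑' i, μ (B i) := ENNReal.tsum_le_tsum hAB
      _ ≤ 1 := hBsum
  exact ENNReal.le_inv_iff_mul_le.2 hmain


end Core


theorem max_level_set_small (V : Type*) [Fintype V] [Nonempty V] (n : ℕ)
    (hn : n = Fintype.card V) (hn2 : 2 ≤ n) :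
    (Measure.pi fun _ : V => geomHalf)
      {ω | 2 * Real.logb 2 n <
        ((Finset.univ.filter
          (fun v : V => ω v + 1 = Finset.univ.sup (fun u : V => ω u + 1))).card : ℝ)}
      ≤ ENNReal.ofReal ((2 : ℝ) ^ (-(2 * Real.logb 2 n))) ∧
    ENNReal.ofReal ((2 : ℝ) ^ (-(2 * Real.logb 2 n))) = 1 / (n : ENNReal) ^ 2 := by
  have hnpos : (0:ℝ) < n := by positivity
  set t : ℝ := 2 * Real.logb 2 n with ht
  have hlogb : (2:ℝ) ^ (Real.logb 2 n) = n :=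
    Real.rpow_logb (by norm_num) (by norm_num) hnpos
  have h2t : (2:ℝ) ^ t = (n:ℝ) ^ 2 := by
    rw [ht, mul_comm, Real.rpow_mul (by norm_num), hlogb,
      show (2:ℝ) = ((2:ℕ):ℝ) by norm_num, Real.rpow_natCast]
  have ht0 : 0 ≤ t := by
    rw [ht]
    have : (1:ℝ) ≤ Real.logb 2 n := by
      rw [show (1:ℝ) = Real.logb 2 2 by simp]
      exact Real.logb_le_logb_of_le (by norm_num) (by norm_num) (by exact_mod_cast hn2)
    linarith
  -- second claim
  have hsecond : ENNReal.ofReal ((2 : ℝ) ^ (-t)) = 1 / (n : ENNReal) ^ 2 := by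
    rw [Real.rpow_neg (by norm_num), h2t,
      ENNReal.ofReal_inv_of_pos (by positivity), ENNReal.ofReal_pow hnpos.le,
      ENNReal.ofReal_natCast, one_div]
  refine ⟨?_, hsecond⟩
  set k : ℕ := Nat.floor t + 1 with hk
  have htk : t < (k:ℝ) := by
    rw [hk]; push_cast; exact Nat.lt_floor_add_one t
  have hn2k : n ^ 2 < 2 ^ k := by
    have : ((n:ℝ)) ^ 2 < ((2 ^ k : ℕ) : ℝ) := by
      rw [← h2t]
      push_cast
      rw [show ((2:ℝ)^k : ℝ) = (2:ℝ) ^ (k:ℝ) by rw [← Real.rpow_natCast]]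
      exact Real.rpow_lt_rpow_of_exponent_lt (by norm_num) htk
    exact_mod_cast this
  have hstep1 : (Measure.pi fun _ : V => geomHalf)
      {ω | t < ((Finset.univ.filter
        (fun v : V => ω v + 1 = Finset.univ.sup (fun u : V => ω u + 1))).card : ℝ)}
      ≤ (Measure.pi fun _ : V => geomHalf)
        {ω : V → ℕ | k ≤ ((Finset.univ.filter
          (fun v : V => ω v + 1 = Finset.univ.sup (fun u : V => ω u + 1))).card)} := by
    refine measure_mono fun ω hω => ?_
    have : Nat.floor t < (Finset.univ.filter
        (fun v : V => ω v + 1 = Finset.univ.sup (fun u : V => ω u + 1))).card :=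
      (Nat.floor_lt ht0).2 hω
    simpa [hk] using this
  have hstep2 := core (V := V) k (Nat.le_add_left 1 _)
  have hstep3 : ((2:ℝ≥0∞) ^ k - 1)⁻¹ ≤ ENNReal.ofReal ((2 : ℝ) ^ (-t)) := by
    rw [hsecond, one_div]
    refine ENNReal.inv_le_inv.2 ?_
    have h1 : n ^ 2 ≤ 2 ^ k - 1 := by omega
    calc ((n : ℝ≥0∞)) ^ 2 = ((n ^ 2 : ℕ) : ℝ≥0∞) := by push_cast; ring
      _ ≤ ((2 ^ k - 1 : ℕ) : ℝ≥0∞) := by exact_mod_cast h1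
      _ = (2:ℝ≥0∞) ^ k - 1 := by
        push_cast [Nat.one_le_two_pow]
        norm_num
  exact le_trans hstep1 (le_trans hstep2 hstep3)
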